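/- Let s be Sylvester's sequence and n ≥ 1. The n×n integer matrix T with T_{ii} = s_i - 1 (indices 0 ≤ i ≤ n-1) and T_{ij} = -1 for i ≠ j has determinant 1. -/

import Mathlib

open Matrix Finset

theorem sylvester_matrix_det_one (s : ℕ → ℕ) (h0 : s 0 = 2)
    (hrec : ∀ k, s (k + 1) = s k ^ 2 - s k + 1) (n : ℕ) (hn : 1 ≤ n) :
    (Matrix.of fun i j : Fin n =>
      if i = j then (s (i : ℕ) : ℤ) - 1 else -1).det = 1 := by
  -- basic facts
  have hs2 : ∀ k, 2 ≤ s k := by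
    intro k
    induction k with
    | zero => omega
    | succ k ih =>
      have h1 : s k ^ 2 = s k * s k := sq (s k)
      have h2 : s k + 1 ≤ s k * s k := by nlinarith
      rw [hrec k, h1]
      omega
  have hprod : ∀ m, ∏ i ∈ Finset.range m, s i = s m - 1 := by
    intro m
    induction m with
    | zero => simp [h0]
    | succ m ih =>
      rw [Finset.prod_range_succ, ih, hrec m]
      have h2 := hs2 m
      have : s m ^ 2 = s m * s m := sq (s m)
      rw [this]
      have hle : (s m - 1) * s m = s m * s m - s m := by
        rw [Nat.sub_mul]; ring_nf
      omega
  -- sum identity over ℚ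
  have hsQ : ∀ k, (s k : ℚ) ≠ 0 := fun k => by
    have := hs2 k; positivity
  have hsum : ∀ m, ∑ i ∈ Finset.range m, (1 : ℚ) / s i
      = 1 - 1 / ∏ i ∈ Finset.range m, (s i : ℚ) := by
    intro m
    induction m with
    | zero => simp
    | succ m ih =>
      have hPcast : (∏ i ∈ Finset.range m, (s i : ℚ)) = ((s m : ℚ) - 1) := by
        rw [← Nat.cast_prod, hprod m, Nat.cast_sub (by have := hs2 m; omega)]
        norm_num
      have hPcast' : (∏ i ∈ Finset.range (m+1), (s i : ℚ))
          = ((s (m+1) : ℚ) - 1) := by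
        rw [← Nat.cast_prod, hprod (m+1), Nat.cast_sub (by have := hs2 (m+1); omega)]
        norm_num
      have hm1 : (s m : ℚ) - 1 ≠ 0 := by
        have := hs2 m
        have : (2:ℚ) ≤ (s m : ℚ) := by exact_mod_cast this
        linarith
      have hrm : (s (m+1) : ℚ) - 1 = (s m : ℚ) * ((s m : ℚ) - 1) := by
        rw [← hPcast', Finset.prod_range_succ, hPcast]; ring
      have hne := hsQ m
      rw [Finset.sum_range_succ, ih, hPcast, hPcast', hrm]
      field_simp
      ring
  -- work over ℚ
  have key : ((Int.castRingHom ℚ).mapMatrix (Matrix.of fun i j : Fin n =>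
      if i = j then (s (i : ℕ) : ℤ) - 1 else -1)).det = 1 := by
    have hfact : (Int.castRingHom ℚ).mapMatrix (Matrix.of fun i j : Fin n =>
        if i = j then (s (i : ℕ) : ℤ) - 1 else -1)
        = (1 + Matrix.replicateCol Unit (fun _ : Fin n => (-1 : ℚ))
            * Matrix.replicateRow Unit (fun j : Fin n => 1 / (s (j : ℕ) : ℚ)))
          * Matrix.diagonal (fun j : Fin n => (s (j : ℕ) : ℚ)) := by
      ext i j
      simp only [RingHom.mapMatrix_apply, Matrix.map_apply, Matrix.of_apply,
        Matrix.mul_apply, Matrix.diagonal_apply, Matrix.add_apply, Matrix.one_apply,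
        Matrix.replicateCol_apply, Matrix.replicateRow_apply, Matrix.mul_apply]
      rw [Finset.sum_eq_single j (by intro b _ hb; simp [hb]) (by simp)]
      simp only [if_pos rfl]
      by_cases h : i = j
      · subst h
        have hne := hsQ (i : ℕ)
        simp [Finset.sum_const]
        field_simp
        ring
      · simp [h, hsQ j]
    rw [hfact, Matrix.det_mul, Matrix.det_one_add_replicateCol_mul_replicateRow, Matrix.det_diagonal]
    have : (fun j : Fin n => 1 / (s (j : ℕ) : ℚ)) ⬝ᵥ (fun _ : Fin n => (-1 : ℚ))
        = -∑ i ∈ Finset.range n, (1 : ℚ) / s i := by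
      simp [dotProduct, div_eq_mul_inv]
      exact Fin.sum_univ_eq_sum_range (fun i => ((s i : ℚ))⁻¹) n
    rw [this, hsum n]
    have hPne : (∏ i ∈ Finset.range n, (s i : ℚ)) ≠ 0 :=
      Finset.prod_ne_zero_iff.2 fun i _ => hsQ i
    rw [← Fin.prod_univ_eq_prod_range (fun i => (s i : ℚ)) n] at *
    field_simp
    ring
  have := (RingHom.map_det (Int.castRingHom ℚ) (Matrix.of fun i j : Fin n =>
      if i = j then (s (i : ℕ) : ℤ) - 1 else -1)).trans key
  have h2 : (((Matrix.of fun i j : Fin n =>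
      if i = j then (s (i : ℕ) : ℤ) - 1 else -1).det : ℤ) : ℚ) = 1 := this
  exact_mod_cast h2
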